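/- Let $q \in L^\infty(\mathbb{R}_+)$ be real-valued, and suppose $\psi(x) = \frac{1}{x}\int_0^x q(t)\,dt$ has a limit $\psi(0+)$ as $x\to 0^+$. Let $g:\mathbb{R}_+ \to \mathbb{C}$ be of the form $g(y) = c\,\frac{e^{iay} - e^{iby}}{y}$ with $a, b$ in the open upper half plane and $c\in\mathbb{C}$, and suppose additionally $q$ has bounded support. Then $\lim_{s\to\infty} \int_0^\infty q(x)\, g(sx)\, s\, dx = \psi(0+) \int_0^\infty g(y)\,dy$. -/

import Mathlib

open Complex MeasureTheory Filter Set Topology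


noncomputable def sl14h (a b c : ℂ) (u : ℝ) : ℂ :=
  c * (Complex.exp (I*a*u) - Complex.exp (I*b*u))

noncomputable def sl14h' (a b c : ℂ) (u : ℝ) : ℂ :=
  c * (I*a*Complex.exp (I*a*u) - I*b*Complex.exp (I*b*u))

noncomputable def sl14h'' (a b c : ℂ) (u : ℝ) : ℂ :=
  c * (I*a*(I*a*Complex.exp (I*a*u)) - I*b*(I*b*Complex.exp (I*b*u)))

lemma aux_exp_norm (z : ℂ) (u : ℝ) : ‖Complex.exp (I*z*u)‖ = Real.exp (-(z.im*u)) := by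
  rw [Complex.norm_exp]
  congr 1
  simp [Complex.mul_re, Complex.mul_im]

lemma aux_deriv_exp (z : ℂ) (u : ℝ) :
    HasDerivAt (fun u : ℝ => Complex.exp (I*z*u)) (I*z*Complex.exp (I*z*u)) u := by
  have h1 : HasDerivAt (fun u : ℝ => I*z*(u:ℂ)) (I*z) u := by
    simpa using (Complex.ofRealCLM.hasDerivAt (x := u)).const_mul (I*z)
  simpa [mul_comm] using h1.cexp

section
variable {a b c : ℂ} (ha : 0 < a.im) (hb : 0 < b.im)

lemma aux_exp_norm_le {z : ℂ} (hz : min a.im b.im ≤ z.im) {u : ℝ} (hu : 0 ≤ u) :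
    ‖Complex.exp (I*z*u)‖ ≤ Real.exp (-(min a.im b.im)*u) := by
  rw [aux_exp_norm]
  exact Real.exp_le_exp.2 (by nlinarith)

lemma sl14h_deriv (u : ℝ) : HasDerivAt (sl14h a b c) (sl14h' a b c u) u := by
  exact (((aux_deriv_exp a u).sub (aux_deriv_exp b u)).const_mul c)

lemma sl14h'_deriv (u : ℝ) : HasDerivAt (sl14h' a b c) (sl14h'' a b c u) u := by
  exact ((((aux_deriv_exp a u).const_mul (I*a)).sub ((aux_deriv_exp b u).const_mul (I*b))).const_mul c)

lemma sl14h_norm_le {u : ℝ} (hu : 0 ≤ u) :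
    ‖sl14h a b c u‖ ≤ 2*‖c‖ * Real.exp (-(min a.im b.im)*u) := by
  have h1 := aux_exp_norm_le (a := a) (b := b) (min_le_left _ _) hu
  have h2 := aux_exp_norm_le (a := a) (b := b) (min_le_right _ _) hu
  calc ‖sl14h a b c u‖ ≤ ‖c‖ * (‖Complex.exp (I*a*u)‖ + ‖Complex.exp (I*b*u)‖) := by
        rw [sl14h, norm_mul]
        gcongr
        exact norm_sub_le _ _
    _ ≤ ‖c‖ * (Real.exp (-(min a.im b.im)*u) + Real.exp (-(min a.im b.im)*u)) := by
        gcongr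
    _ = _ := by ring

lemma sl14h'_norm_le {u : ℝ} (hu : 0 ≤ u) :
    ‖sl14h' a b c u‖ ≤ ‖c‖*(‖a‖+‖b‖) * Real.exp (-(min a.im b.im)*u) := by
  have h1 := aux_exp_norm_le (a := a) (b := b) (min_le_left _ _) hu
  have h2 := aux_exp_norm_le (a := a) (b := b) (min_le_right _ _) hu
  calc ‖sl14h' a b c u‖ ≤ ‖c‖ * (‖a‖*‖Complex.exp (I*a*u)‖ + ‖b‖*‖Complex.exp (I*b*u)‖) := by
        rw [sl14h', norm_mul]
        gcongr
        refine (norm_sub_le _ _).trans ?_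
        simp [norm_mul]
    _ ≤ ‖c‖ * (‖a‖ * Real.exp (-(min a.im b.im)*u) + ‖b‖ * Real.exp (-(min a.im b.im)*u)) := by
        gcongr
    _ = _ := by ring

lemma sl14h''_norm_le {u : ℝ} (hu : 0 ≤ u) :
    ‖sl14h'' a b c u‖ ≤ ‖c‖*(‖a‖^2+‖b‖^2) * Real.exp (-(min a.im b.im)*u) := by
  have h1 := aux_exp_norm_le (a := a) (b := b) (min_le_left _ _) hu
  have h2 := aux_exp_norm_le (a := a) (b := b) (min_le_right _ _) hu
  calc ‖sl14h'' a b c u‖ ≤ ‖c‖ * (‖a‖^2*‖Complex.exp (I*a*u)‖ + ‖b‖^2*‖Complex.exp (I*b*u)‖) := by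
        rw [sl14h'', norm_mul]
        gcongr
        refine (norm_sub_le _ _).trans (le_of_eq ?_)
        simp [norm_mul]
        ring
    _ ≤ ‖c‖ * (‖a‖^2 * Real.exp (-(min a.im b.im)*u) + ‖b‖^2 * Real.exp (-(min a.im b.im)*u)) := by
        gcongr
    _ = _ := by ring
end

lemma aux_exp_le_one {a b : ℂ} (ha : 0 < a.im) (hb : 0 < b.im) {u : ℝ} (hu : 0 ≤ u) :
    Real.exp (-(min a.im b.im)*u) ≤ 1 := by
  rw [Real.exp_le_one_iff]
  have : 0 < min a.im b.im := lt_min ha hb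
  nlinarith

lemma sl14h_lip {a b c : ℂ} (ha : 0 < a.im) (hb : 0 < b.im) {u : ℝ} (hu : 0 ≤ u) :
    ‖sl14h a b c u‖ ≤ ‖c‖*(‖a‖+‖b‖) * u := by
  have h0 : sl14h a b c 0 = 0 := by simp [sl14h]
  have key := Convex.norm_image_sub_le_of_norm_hasDerivWithin_le
    (f := sl14h a b c) (f' := sl14h' a b c) (s := Icc 0 u) (C := ‖c‖*(‖a‖+‖b‖))
    (fun t _ => (sl14h_deriv t).hasDerivWithinAt)
    (fun t ht => (sl14h'_norm_le ht.1).trans (by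
      have := aux_exp_le_one ha hb ht.1
      have h1 : 0 ≤ ‖c‖*(‖a‖+‖b‖) := by positivity
      nlinarith))
    (convex_Icc 0 u) (left_mem_Icc.2 hu) (right_mem_Icc.2 hu)
  rw [h0, sub_zero, sub_zero, Real.norm_eq_abs, _root_.abs_of_nonneg hu] at key
  exact key

lemma sl14phi_deriv {a b c : ℂ} (u : ℝ) :
    HasDerivAt (fun u : ℝ => (u:ℂ) * sl14h' a b c u - sl14h a b c u)
      ((u:ℂ) * sl14h'' a b c u) u := by
  have h1 : HasDerivAt (fun u : ℝ => (u:ℂ)) 1 u := by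
    simpa using (hasDerivAt_id u).ofReal_comp
  have h2 : HasDerivAt (fun u : ℝ => (u:ℂ) * sl14h' a b c u - sl14h a b c u)
      (1 * sl14h' a b c u + (u:ℂ) * sl14h'' a b c u - sl14h' a b c u) u :=
    (h1.mul (sl14h'_deriv u)).sub (sl14h_deriv u)
  convert h2 using 1
  ring

lemma sl14phi_norm_le {a b c : ℂ} (ha : 0 < a.im) (hb : 0 < b.im) {u : ℝ} (hu : 0 ≤ u) :
    ‖(u:ℂ) * sl14h' a b c u - sl14h a b c u‖ ≤ ‖c‖*(‖a‖^2+‖b‖^2) * u^2 := by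
  have key := Convex.norm_image_sub_le_of_norm_hasDerivWithin_le
    (f := fun u : ℝ => (u:ℂ) * sl14h' a b c u - sl14h a b c u)
    (f' := fun u : ℝ => (u:ℂ) * sl14h'' a b c u) (s := Icc 0 u)
    (C := ‖c‖*(‖a‖^2+‖b‖^2) * u)
    (fun t _ => (sl14phi_deriv t).hasDerivWithinAt)
    (fun t ht => by
      rw [norm_mul, Complex.norm_real, Real.norm_eq_abs, _root_.abs_of_nonneg ht.1]
      have h2 := sl14h''_norm_le (a := a) (b := b) (c := c) ht.1
      have h3 := aux_exp_le_one ha hb ht.1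
      have h4 : 0 ≤ ‖c‖*(‖a‖^2+‖b‖^2) := by positivity
      have h5 : ‖sl14h'' a b c t‖ ≤ ‖c‖*(‖a‖^2+‖b‖^2) := by nlinarith
      nlinarith [norm_nonneg (sl14h'' a b c t), ht.1, ht.2])
    (convex_Icc 0 u) (left_mem_Icc.2 hu) (right_mem_Icc.2 hu)
  have h0 : (0:ℝ) = (0:ℝ) := rfl
  simp only [Complex.ofReal_zero, zero_mul] at key
  rw [show sl14h a b c 0 = 0 by simp [sl14h]] at key
  rw [sub_zero, sub_zero, sub_zero, Real.norm_eq_abs, _root_.abs_of_nonneg hu] at key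
  calc ‖(u:ℂ) * sl14h' a b c u - sl14h a b c u‖ ≤ ‖c‖*(‖a‖^2+‖b‖^2) * u * u := key
    _ = _ := by ring

noncomputable def sl14g1 (a b c : ℂ) (u : ℝ) : ℂ :=
  ((u:ℂ) * sl14h' a b c u - sl14h a b c u)/(u:ℂ)^2

lemma sl14g_deriv {a b c : ℂ} {u : ℝ} (hu : u ≠ 0) :
    HasDerivAt (fun v : ℝ => sl14h a b c v / (v:ℂ)) (sl14g1 a b c u) u := by
  have h1 : HasDerivAt (fun v : ℝ => (v:ℂ)) 1 u := by
    simpa using (hasDerivAt_id u).ofReal_comp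
  have h2 := (sl14h_deriv (a := a) (b := b) (c := c) u).div h1 (by exact_mod_cast hu)
  refine h2.congr_deriv ?_
  rw [sl14g1]
  field_simp

lemma sl14g1_norm_le {a b c : ℂ} (ha : 0 < a.im) (hb : 0 < b.im) {u : ℝ} (hu : 0 < u) :
    ‖sl14g1 a b c u‖ ≤ ‖c‖*(‖a‖^2+‖b‖^2) := by
  have h2 : ‖((u:ℂ))^2‖ = u^2 := by
    rw [norm_pow, Complex.norm_real, Real.norm_eq_abs, _root_.abs_of_nonneg hu.le]
  rw [sl14g1, norm_div, h2, div_le_iff₀ (pow_pos hu 2)]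
  exact sl14phi_norm_le ha hb (le_of_lt hu)

lemma sl14ug1_norm_le {a b c : ℂ} (ha : 0 < a.im) (hb : 0 < b.im) {u : ℝ} (hu : 0 < u) :
    ‖(u:ℂ) * sl14g1 a b c u‖ ≤
      ((‖c‖*(‖a‖^2+‖b‖^2)) * Real.exp (min a.im b.im) + ‖c‖*(‖a‖+‖b‖) + 2*‖c‖)
        * Real.exp (-(min a.im b.im)*u) := by
  set δ := min a.im b.im with hδ
  have hδ0 : 0 < δ := lt_min ha hb
  have hnorm : ‖(u:ℂ) * sl14g1 a b c u‖ = ‖(u:ℂ) * sl14h' a b c u - sl14h a b c u‖ / u := by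
    rw [sl14g1]
    rw [show (u:ℂ) * (((u:ℂ) * sl14h' a b c u - sl14h a b c u)/(u:ℂ)^2)
        = ((u:ℂ) * sl14h' a b c u - sl14h a b c u)/(u:ℂ) by
      have hu' : (u:ℂ) ≠ 0 := by exact_mod_cast hu.ne'
      field_simp]
    rw [norm_div, Complex.norm_real, Real.norm_eq_abs, _root_.abs_of_nonneg hu.le]
  rw [hnorm]
  rcases le_total u 1 with h1 | h1
  · -- small u : bound by C2 * u ≤ C2 ≤ C2 * exp(δ) * exp(-δ u)
    have key : ‖(u:ℂ) * sl14h' a b c u - sl14h a b c u‖ / u ≤ ‖c‖*(‖a‖^2+‖b‖^2) * u := by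
      rw [div_le_iff₀ hu]
      calc ‖(u:ℂ) * sl14h' a b c u - sl14h a b c u‖ ≤ ‖c‖*(‖a‖^2+‖b‖^2) * u^2 :=
            sl14phi_norm_le ha hb hu.le
        _ = ‖c‖*(‖a‖^2+‖b‖^2) * u * u := by ring
    refine key.trans ?_
    have h2 : (1:ℝ) ≤ Real.exp δ * Real.exp (-δ*u) := by
      rw [← Real.exp_add]
      rw [show δ + -δ*u = δ*(1-u) by ring]
      exact Real.one_le_exp (by nlinarith)
    have hC : 0 ≤ ‖c‖*(‖a‖^2+‖b‖^2) := by positivity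
    have h3 := mul_le_mul_of_nonneg_left h2 hC
    have h4 : 0 ≤ (‖c‖*(‖a‖+‖b‖) + 2*‖c‖) * Real.exp (-δ*u) := by positivity
    nlinarith
  · -- large u: ‖φ‖/u ≤ ‖h'‖ + ‖h‖/u ≤ (C1 + 2‖c‖) e^{-δu}
    have key : ‖(u:ℂ) * sl14h' a b c u - sl14h a b c u‖ / u
        ≤ (‖c‖*(‖a‖+‖b‖) + 2*‖c‖) * Real.exp (-δ*u) := by
      have hu0 : (0:ℝ) < u := hu
      have e1 : ‖(u:ℂ) * sl14h' a b c u - sl14h a b c u‖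
          ≤ u * ‖sl14h' a b c u‖ + ‖sl14h a b c u‖ := by
        refine (norm_sub_le _ _).trans ?_
        gcongr
        rw [norm_mul, Complex.norm_real, Real.norm_eq_abs, _root_.abs_of_nonneg hu.le]
      have e2 := sl14h'_norm_le (a := a) (b := b) (c := c) hu.le
      have e3 := sl14h_norm_le (a := a) (b := b) (c := c) hu.le
      rw [div_le_iff₀ hu]
      calc ‖(u:ℂ) * sl14h' a b c u - sl14h a b c u‖
          ≤ u * (‖c‖*(‖a‖+‖b‖) * Real.exp (-δ*u)) + 2*‖c‖ * Real.exp (-δ*u) := by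
            refine e1.trans ?_; gcongr
        _ ≤ u * (‖c‖*(‖a‖+‖b‖) * Real.exp (-δ*u)) + 2*‖c‖ * Real.exp (-δ*u) * u := by
            nlinarith [mul_nonneg (mul_nonneg (by positivity : (0:ℝ) ≤ 2*‖c‖)
              (Real.exp_nonneg (-δ*u))) (by linarith : (0:ℝ) ≤ u - 1)]
        _ = (‖c‖*(‖a‖+‖b‖) + 2*‖c‖) * Real.exp (-δ*u) * u := by ring
    refine key.trans ?_
    have h5 : 0 ≤ (‖c‖*(‖a‖^2+‖b‖^2)) * Real.exp δ * Real.exp (-δ*u) := by positivity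
    nlinarith

lemma sl14g_norm_le {a b c : ℂ} (ha : 0 < a.im) (hb : 0 < b.im) {u : ℝ} (hu : 0 < u) :
    ‖sl14h a b c u / (u:ℂ)‖ ≤
      (‖c‖*(‖a‖+‖b‖) * Real.exp (min a.im b.im) + 2*‖c‖) * Real.exp (-(min a.im b.im)*u) := by
  set δ := min a.im b.im with hδ
  have hδ0 : 0 < δ := lt_min ha hb
  rw [norm_div, Complex.norm_real, Real.norm_eq_abs, _root_.abs_of_nonneg hu.le]
  rcases le_total u 1 with h1 | h1
  · have key : ‖sl14h a b c u‖ / u ≤ ‖c‖*(‖a‖+‖b‖) := by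
      rw [div_le_iff₀ hu]
      calc ‖sl14h a b c u‖ ≤ ‖c‖*(‖a‖+‖b‖) * u := sl14h_lip ha hb hu.le
        _ = ‖c‖*(‖a‖+‖b‖) * u := rfl
    refine key.trans ?_
    have h2 : (1:ℝ) ≤ Real.exp δ * Real.exp (-δ*u) := by
      rw [← Real.exp_add, show δ + -δ*u = δ*(1-u) by ring]
      exact Real.one_le_exp (by nlinarith)
    have hC : 0 ≤ ‖c‖*(‖a‖+‖b‖) := by positivity
    have h3 := mul_le_mul_of_nonneg_left h2 hC
    have h4 : 0 ≤ 2*‖c‖ * Real.exp (-δ*u) := by positivity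
    nlinarith
  · have key : ‖sl14h a b c u‖ / u ≤ 2*‖c‖ * Real.exp (-δ*u) := by
      rw [div_le_iff₀ hu]
      calc ‖sl14h a b c u‖ ≤ 2*‖c‖ * Real.exp (-δ*u) := sl14h_norm_le hu.le
        _ ≤ 2*‖c‖ * Real.exp (-δ*u) * u := by
            nlinarith [Real.exp_nonneg (-δ*u), norm_nonneg c, mul_nonneg (mul_nonneg (by positivity : (0:ℝ) ≤ 2*‖c‖) (Real.exp_nonneg (-δ*u))) (by linarith : (0:ℝ) ≤ u - 1)]
    refine key.trans ?_
    have h5 : 0 ≤ ‖c‖*(‖a‖+‖b‖) * Real.exp δ * Real.exp (-δ*u) := by positivity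
    nlinarith

set_option maxHeartbeats 1000000 in
theorem stmt_14 (q : ℝ → ℝ) (hq : Measurable q)
    (M : ℝ) (hM : ∀ x, |q x| ≤ M)
    (R : ℝ) (hsupp : ∀ x, R < x → q x = 0)
    (ψ0 : ℝ)
    (hψ : Filter.Tendsto (fun x : ℝ => (1 / x) * ∫ t in (0 : ℝ)..x, q t)
      (nhdsWithin 0 (Set.Ioi 0)) (nhds ψ0))
    (a b c : ℂ) (ha : 0 < a.im) (hb : 0 < b.im)
    (g : ℝ → ℂ)
    (hg : ∀ y : ℝ, g y =
      c * (Complex.exp (Complex.I * a * y) - Complex.exp (Complex.I * b * y)) / y) :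
    Filter.Tendsto
      (fun s : ℝ => ∫ x in Set.Ioi (0 : ℝ), (q x : ℂ) * g (s * x) * s)
      atTop (nhds ((ψ0 : ℂ) * ∫ y in Set.Ioi (0 : ℝ), g y)) := by
  set δ := min a.im b.im with hδdef
  have hδ0 : 0 < δ := lt_min ha hb
  have hM0 : 0 ≤ M := (abs_nonneg (q 0)).trans (hM 0)
  set R' : ℝ := max R 1 with hR'def
  have hR'pos : (0:ℝ) < R' := lt_of_lt_of_le one_pos (le_max_right R 1)
  have hRR' : R ≤ R' := le_max_left R 1
  have hgh : ∀ y : ℝ, g y = sl14h a b c y / (y:ℂ) := fun y => by rw [hg y, sl14h]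
  -- continuity and measurability facts
  have hhcont : Continuous (sl14h a b c) :=
    continuous_iff_continuousAt.2 fun u => (sl14h_deriv u).continuousAt
  have hgm : Measurable g := by
    have : g = fun y => sl14h a b c y / (y:ℂ) := funext hgh
    rw [this]
    exact hhcont.measurable.div Complex.measurable_ofReal
  have hg1m : Measurable (sl14g1 a b c) := by
    unfold sl14g1
    have h1 : Continuous (fun u : ℝ => (u:ℂ) * sl14h' a b c u - sl14h a b c u) :=
      continuous_iff_continuousAt.2 fun u => (sl14phi_deriv u).continuousAt
    exact h1.measurable.div (Complex.measurable_ofReal.pow_const 2)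
  have hg1c : ∀ u : ℝ, u ≠ 0 → ContinuousAt (sl14g1 a b c) u := by
    intro u hu
    unfold sl14g1
    exact ContinuousAt.div (sl14phi_deriv u).continuousAt
      ((Complex.continuous_ofReal.pow 2).continuousAt)
      (by exact_mod_cast pow_ne_zero 2 (Complex.ofReal_ne_zero.2 hu))
  -- q integrable on intervals, Q basic facts
  have hqi : ∀ x₁ x₂ : ℝ, IntervalIntegrable q volume x₁ x₂ := by
    intro x₁ x₂
    rw [intervalIntegrable_iff]
    exact Measure.integrableOn_of_bounded measure_Ioc_lt_top.ne
      hq.aestronglyMeasurable (ae_of_all _ fun x => by rw [Real.norm_eq_abs]; exact hM x)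
  set Q : ℝ → ℝ := fun x => ∫ t in (0:ℝ)..x, q t with hQdef
  have hQcont : Continuous Q := intervalIntegral.continuous_primitive hqi 0
  have hQb : ∀ x : ℝ, 0 ≤ x → |Q x| ≤ M * x := by
    intro x hx
    have h1 := intervalIntegral.norm_integral_le_of_norm_le_const (a := 0) (b := x) (C := M)
      (f := q) (fun t _ => by rw [Real.norm_eq_abs]; exact hM t)
    calc |Q x| ≤ M * |x - 0| := by simpa [Real.norm_eq_abs] using h1
      _ = M * x := by rw [sub_zero, _root_.abs_of_nonneg hx]
  -- limit of h at infinity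
  have hhtend : Tendsto (fun v : ℝ => sl14h a b c v) atTop (𝓝 0) := by
    rw [tendsto_zero_iff_norm_tendsto_zero]
    have hexp : Tendsto (fun v : ℝ => 2*‖c‖ * Real.exp (-δ*v)) atTop (𝓝 0) := by
      have h1 : Tendsto (fun v : ℝ => -δ*v) atTop atBot := by
        have : Tendsto (fun v : ℝ => δ * v) atTop atTop :=
          Tendsto.const_mul_atTop hδ0 tendsto_id
        have h2 := tendsto_neg_atTop_atBot.comp this
        refine h2.congr (fun v => by simp [neg_mul])
      have := (Real.tendsto_exp_atBot).comp h1
      simpa using this.const_mul (2*‖c‖)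
    refine squeeze_zero' ?_ ?_ hexp
    · filter_upwards with v using norm_nonneg _
    · filter_upwards [eventually_ge_atTop (0:ℝ)] with v hv using sl14h_norm_le hv
  -- the dominating constants
  set C2 : ℝ := ‖c‖*(‖a‖^2+‖b‖^2) with hC2def
  set C6 : ℝ := (‖c‖*(‖a‖^2+‖b‖^2)) * Real.exp δ + ‖c‖*(‖a‖+‖b‖) + 2*‖c‖ with hC6def
  set Cg : ℝ := ‖c‖*(‖a‖+‖b‖) * Real.exp δ + 2*‖c‖ with hCgdef
  -- THE KEY IDENTITY
  have key : ∀ s : ℝ, 0 < s →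
      (∫ x in Set.Ioi (0:ℝ), (q x : ℂ) * g (s * x) * s)
        = (Q R' : ℂ) * (sl14h a b c (s*R') / (R':ℂ))
          - ∫ u in Set.Ioi (0:ℝ),
              Set.indicator (Set.Ioc 0 (s*R'))
                (fun u => ((Q (u/s) * s : ℝ) : ℂ) * sl14g1 a b c u) u := by
    intro s hs
    have hs0 : (s:ℂ) ≠ 0 := Complex.ofReal_ne_zero.2 hs.ne'
    have hR'0c : (R':ℂ) ≠ 0 := Complex.ofReal_ne_zero.2 hR'pos.ne'
    have hC20 : 0 ≤ C2 := by rw [hC2def]; positivity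
    have hCg0 : 0 ≤ Cg := by rw [hCgdef]; positivity
    set K' : ℝ → ℂ := fun t => sl14g1 a b c (s*t) * (s:ℂ) * (s:ℂ) with hK'def
    have hK'm : Measurable K' :=
      ((hg1m.comp (measurable_const_mul s)).mul_const _).mul_const _
    -- derivative of x ↦ g (s*x) * s
    have hKd : ∀ t : ℝ, 0 < t → HasDerivAt (fun x : ℝ => g (s*x) * (s:ℂ)) (K' t) t := by
      intro t ht
      have hst : s*t ≠ 0 := (mul_pos hs ht).ne'
      have h1 : HasDerivAt (fun x : ℝ => s*x) s t := by
        simpa using (hasDerivAt_id t).const_mul s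
      have h2 : HasDerivAt (fun x : ℝ => sl14h a b c (s*x) / ((s*x : ℝ):ℂ))
          (s • sl14g1 a b c (s*t)) t := (sl14g_deriv hst).scomp t h1
      have h3 := h2.mul_const (s:ℂ)
      have h4 : (fun x : ℝ => g (s*x) * (s:ℂ))
          = fun x : ℝ => sl14h a b c (s*x) / ((s*x : ℝ):ℂ) * (s:ℂ) := by
        funext x; rw [hgh (s*x)]
      rw [h4]
      refine h3.congr_deriv ?_
      rw [Complex.real_smul, hK'def]
      ring
    -- interval integrability of K'
    have hK'int : ∀ x ∈ Set.Ioc (0:ℝ) R', IntervalIntegrable K' volume x R' := by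
      intro x hx
      apply ContinuousOn.intervalIntegrable
      intro t ht
      rw [Set.uIcc_of_le hx.2] at ht
      have ht0 : 0 < t := lt_of_lt_of_le hx.1 ht.1
      have hst : s*t ≠ 0 := (mul_pos hs ht0).ne'
      have hc1 : ContinuousAt (fun t : ℝ => sl14g1 a b c (s*t)) t :=
        (hg1c (s*t) hst).comp ((continuous_const.mul continuous_id).continuousAt)
      exact ((hc1.mul continuousAt_const).mul continuousAt_const).continuousWithinAt
    -- FTC
    have hFTC : ∀ x ∈ Set.Ioc (0:ℝ) R',
        (∫ t in x..R', K' t) = g (s*R') * (s:ℂ) - g (s*x) * (s:ℂ) := by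
      intro x hx
      refine intervalIntegral.integral_eq_sub_of_hasDerivAt
        (f := fun x : ℝ => g (s*x) * (s:ℂ)) (fun t ht => ?_) (hK'int x hx)
      rw [Set.uIcc_of_le hx.2] at ht
      exact hKd t (lt_of_lt_of_le hx.1 ht.1)
    -- restriction to Ioc 0 R'
    have hzfun : ∀ x ∈ Set.Ioi R', (q x:ℂ) * g (s*x) * (s:ℂ) = 0 := fun x hx => by
      rw [hsupp x (lt_of_le_of_lt hRR' hx)]; simp
    have hmeas1 : Measurable (fun x : ℝ => (q x:ℂ) * g (s*x) * (s:ℂ)) :=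
      ((Complex.measurable_ofReal.comp hq).mul
        (hgm.comp (measurable_const_mul s))).mul_const _
    have hIntOn1 : IntegrableOn (fun x => (q x:ℂ) * g (s*x) * (s:ℂ)) (Set.Ioc 0 R') := by
      refine Measure.integrableOn_of_bounded (M := M * (Cg * s)) measure_Ioc_lt_top.ne
        hmeas1.aestronglyMeasurable ?_
      rw [ae_restrict_iff' measurableSet_Ioc]
      refine ae_of_all _ fun x hx => ?_
      have hsx : 0 < s*x := mul_pos hs hx.1
      have h5 : ‖g (s*x)‖ ≤ Cg := by
        rw [hgh (s*x)]
        refine (sl14g_norm_le ha hb hsx).trans ?_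
        have h6 : Real.exp (-(δ)*(s*x)) ≤ 1 := Real.exp_le_one_iff.2 (by nlinarith)
        nlinarith
      calc ‖(q x:ℂ) * g (s*x) * (s:ℂ)‖ = |q x| * ‖g (s*x)‖ * s := by
            rw [norm_mul, norm_mul, Complex.norm_real, Real.norm_eq_abs,
              Complex.norm_real, Real.norm_eq_abs, _root_.abs_of_nonneg hs.le]
        _ = (|q x| * ‖g (s*x)‖) * s := by ring
        _ ≤ (M * Cg) * s := mul_le_mul_of_nonneg_right
              (mul_le_mul (hM x) h5 (norm_nonneg _) hM0) hs.le
        _ = M * (Cg * s) := by ring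
    have hIntOn2 : IntegrableOn (fun x => (q x:ℂ) * g (s*x) * (s:ℂ)) (Set.Ioi R') :=
      (integrableOn_zero (ε' := ℂ)).congr_fun
        (fun x hx => (hzfun x hx).symm) measurableSet_Ioi
    have hA : (∫ x in Set.Ioi (0:ℝ), (q x:ℂ) * g (s*x) * (s:ℂ))
        = ∫ x in Set.Ioc 0 R', (q x:ℂ) * g (s*x) * (s:ℂ) := by
      rw [← Set.Ioc_union_Ioi_eq_Ioi hR'pos.le,
        setIntegral_union (Set.Ioc_disjoint_Ioi le_rfl) measurableSet_Ioi hIntOn1 hIntOn2,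
        setIntegral_congr_fun measurableSet_Ioi hzfun, integral_zero, add_zero]
    -- Fubini data
    set f2 : ℝ → ℝ → ℂ := fun x t => if x < t then (q x:ℂ) * K' t else 0 with hf2def
    have hf2m : Measurable (Function.uncurry f2) := by
      refine Measurable.ite (measurableSet_lt measurable_fst measurable_snd) ?_ measurable_const
      exact (Complex.measurable_ofReal.comp (hq.comp measurable_fst)).mul (hK'm.comp measurable_snd)
    have hf2int : Integrable (Function.uncurry f2)
        ((volume.restrict (Set.Ioc 0 R')).prod (volume.restrict (Set.Ioc 0 R'))) := by
      refine Integrable.mono' (g := fun _ => M * (C2 * s * s)) (integrable_const _)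
        hf2m.aestronglyMeasurable ?_
      rw [Measure.prod_restrict, ae_restrict_iff' (measurableSet_Ioc.prod measurableSet_Ioc)]
      refine ae_of_all _ fun p hp => ?_
      rcases hp with ⟨hp1, hp2⟩
      by_cases hlt : p.1 < p.2
      · have hst : 0 < s * p.2 := mul_pos hs hp2.1
        calc ‖Function.uncurry f2 p‖ = |q p.1| * (‖sl14g1 a b c (s*p.2)‖ * s * s) := by
              rw [Function.uncurry, hf2def]
              simp only [if_pos hlt]
              rw [norm_mul, norm_mul, norm_mul, Complex.norm_real, Real.norm_eq_abs,
                Complex.norm_real, Real.norm_eq_abs, _root_.abs_of_nonneg hs.le]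
          _ ≤ M * (C2 * s * s) := by
              refine mul_le_mul (hM p.1) ?_ (by positivity) hM0
              have h8 := (sl14g1_norm_le (c := c) ha hb hst).trans_eq hC2def.symm
              exact mul_le_mul_of_nonneg_right (mul_le_mul_of_nonneg_right h8 hs.le) hs.le
      · have : Function.uncurry f2 p = 0 := by
          rw [Function.uncurry, hf2def]; simp only [if_neg hlt]
        rw [this, norm_zero]
        positivity
    have hswap : (∫ x in Set.Ioc (0:ℝ) R', ∫ t in Set.Ioc (0:ℝ) R', f2 x t)
        = ∫ t in Set.Ioc (0:ℝ) R', ∫ x in Set.Ioc (0:ℝ) R', f2 x t :=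
      integral_integral_swap hf2int
    -- inner integral identities
    have hInner1 : ∀ x ∈ Set.Ioc (0:ℝ) R',
        (∫ t in Set.Ioc (0:ℝ) R', f2 x t) = (q x:ℂ) * ∫ t in x..R', K' t := by
      intro x hx
      have h6 : ∀ t : ℝ, f2 x t = Set.indicator (Set.Ioi x) (fun t => (q x:ℂ) * K' t) t := by
        intro t
        by_cases hlt : x < t
        · rw [hf2def]; simp only [if_pos hlt]
          rw [Set.indicator_of_mem (Set.mem_Ioi.2 hlt)]
        · rw [hf2def]; simp only [if_neg hlt]
          rw [Set.indicator_of_notMem (by simpa using hlt)]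
      rw [setIntegral_congr_fun measurableSet_Ioc (fun t _ => h6 t),
        setIntegral_indicator measurableSet_Ioi,
        Set.Ioc_inter_Ioi, sup_eq_right.2 hx.1.le,
        ← intervalIntegral.integral_of_le hx.2, intervalIntegral.integral_const_mul]
    have hInner2 : ∀ t ∈ Set.Ioc (0:ℝ) R',
        (∫ x in Set.Ioc (0:ℝ) R', f2 x t) = (Q t:ℂ) * K' t := by
      intro t ht
      have h6 : ∀ x : ℝ, f2 x t = Set.indicator (Set.Iio t) (fun x => (q x:ℂ) * K' t) x := by
        intro x
        by_cases hlt : x < t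
        · rw [hf2def]; simp only [if_pos hlt]
          rw [Set.indicator_of_mem (Set.mem_Iio.2 hlt)]
        · rw [hf2def]; simp only [if_neg hlt]
          rw [Set.indicator_of_notMem (by simpa using hlt)]
      have h7 : Set.Ioc (0:ℝ) R' ∩ Set.Iio t = Set.Ioo 0 t := by
        ext x
        simp only [Set.mem_inter_iff, Set.mem_Ioc, Set.mem_Iio, Set.mem_Ioo]
        exact ⟨fun ⟨⟨h1, _⟩, h3⟩ => ⟨h1, h3⟩, fun ⟨h1, h2⟩ => ⟨⟨h1, h2.le.trans ht.2⟩, h2⟩⟩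
      rw [setIntegral_congr_fun measurableSet_Ioc (fun x _ => h6 x),
        setIntegral_indicator measurableSet_Iio, h7, integral_mul_const]
      congr 1
      have h8 : (∫ x in Set.Ioo (0:ℝ) t, ((q x:ℂ))) = ((∫ x in Set.Ioo (0:ℝ) t, q x : ℝ):ℂ) :=
        integral_ofReal
      have h9 : Q t = ∫ x in Set.Ioo (0:ℝ) t, q x := by
        show (∫ u in (0:ℝ)..t, q u) = _
        rw [intervalIntegral.integral_of_le ht.1.le, integral_Ioc_eq_integral_Ioo]
      rw [h8, h9]
    -- combine
    have hIq : IntegrableOn (fun x : ℝ => (q x:ℂ)) (Set.Ioc 0 R') := by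
      refine Measure.integrableOn_of_bounded (M := M) measure_Ioc_lt_top.ne
        (Complex.measurable_ofReal.comp hq).aestronglyMeasurable ?_
      refine ae_of_all _ fun x => ?_
      rw [Complex.norm_real, Real.norm_eq_abs]
      exact hM x
    have hI1 : IntegrableOn (fun x : ℝ => (q x:ℂ) * (g (s*R') * (s:ℂ))) (Set.Ioc 0 R') :=
      hIq.mul_const _
    have hI2 : Integrable (fun x : ℝ => ∫ t in Set.Ioc (0:ℝ) R', f2 x t)
        (volume.restrict (Set.Ioc 0 R')) := hf2int.integral_prod_left
    have hpt : ∀ x ∈ Set.Ioc (0:ℝ) R', (q x:ℂ) * g (s*x) * (s:ℂ)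
        = (q x:ℂ) * (g (s*R') * (s:ℂ)) - ∫ t in Set.Ioc (0:ℝ) R', f2 x t := by
      intro x hx
      rw [hInner1 x hx, hFTC x hx]
      ring
    have hQR' : (∫ x in Set.Ioc (0:ℝ) R', (q x:ℂ)) = ((Q R' : ℝ):ℂ) := by
      have h8 : (∫ x in Set.Ioc (0:ℝ) R', ((q x:ℂ))) = ((∫ x in Set.Ioc (0:ℝ) R', q x : ℝ):ℂ) :=
        integral_ofReal
      have h9 : Q R' = ∫ x in Set.Ioc (0:ℝ) R', q x := by
        show (∫ u in (0:ℝ)..R', q u) = _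
        rw [intervalIntegral.integral_of_le hR'pos.le]
      rw [h8, h9]
    have hbdry : ((Q R' : ℝ):ℂ) * (g (s*R') * (s:ℂ))
        = (Q R' : ℂ) * (sl14h a b c (s*R') / (R':ℂ)) := by
      rw [hgh (s*R')]
      push_cast
      field_simp
    have hsubst : (∫ t in Set.Ioc (0:ℝ) R', (Q t:ℂ) * K' t)
        = ∫ u in Set.Ioi (0:ℝ),
            Set.indicator (Set.Ioc 0 (s*R'))
              (fun u => ((Q (u/s) * s : ℝ) : ℂ) * sl14g1 a b c u) u := by
      set W : ℝ → ℂ := fun u => ((Q (u/s) * s : ℝ):ℂ) * sl14g1 a b c u with hWdef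
      have h7 : ∀ t : ℝ, (Q t:ℂ) * K' t = s • W (s*t) := by
        intro t
        rw [hWdef]
        simp only []
        rw [mul_div_cancel_left₀ t hs.ne']
        rw [Complex.real_smul, hK'def]
        push_cast
        ring
      rw [← intervalIntegral.integral_of_le hR'pos.le,
        intervalIntegral.integral_congr (g := fun t => s • W (s*t)) (fun t _ => h7 t),
        intervalIntegral.integral_smul,
        intervalIntegral.smul_integral_comp_mul_left W s, mul_zero,
        intervalIntegral.integral_of_le (by positivity : (0:ℝ) ≤ s*R')]
      rw [setIntegral_indicator (s := Set.Ioi (0:ℝ)) measurableSet_Ioc,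
        Set.inter_eq_right.mpr Set.Ioc_subset_Ioi_self]
    rw [hA, setIntegral_congr_fun measurableSet_Ioc hpt, integral_sub hI1 hI2,
      integral_mul_const, hQR', hbdry]
    congr 1
    rw [hswap, setIntegral_congr_fun measurableSet_Ioc hInner2, hsubst]
  -- boundary term tends to zero
  have hbd : Tendsto (fun s : ℝ => (Q R' : ℂ) * (sl14h a b c (s*R') / (R':ℂ))) atTop (𝓝 0) := by
    have h1 : Tendsto (fun s : ℝ => s * R') atTop atTop :=
      Tendsto.atTop_mul_const hR'pos tendsto_id
    have h2 : Tendsto (fun s : ℝ => sl14h a b c (s*R')) atTop (𝓝 0) := hhtend.comp h1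
    have h3 := h2.const_mul ((Q R' : ℂ) / (R':ℂ))
    rw [mul_zero] at h3
    refine h3.congr fun s => by ring
  -- dominated convergence
  have hdct : Tendsto (fun s : ℝ => ∫ u in Set.Ioi (0:ℝ),
      Set.indicator (Set.Ioc 0 (s*R'))
        (fun u => ((Q (u/s) * s : ℝ) : ℂ) * sl14g1 a b c u) u) atTop
      (𝓝 (∫ u in Set.Ioi (0:ℝ), (ψ0 : ℂ) * ((u:ℂ) * sl14g1 a b c u))) := by
    have hbint : Integrable (fun u : ℝ => M * (C6 * Real.exp (-δ*u)))
        (volume.restrict (Set.Ioi 0)) :=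
      ((exp_neg_integrableOn_Ioi 0 hδ0).const_mul C6).const_mul M
    refine tendsto_integral_filter_of_dominated_convergence _ ?_ ?_ hbint ?_
    · filter_upwards with s
      refine (Measurable.indicator ?_ measurableSet_Ioc).aestronglyMeasurable
      exact (Complex.measurable_ofReal.comp
        ((hQcont.measurable.comp (measurable_id.div_const s)).mul measurable_const)).mul hg1m
    · filter_upwards [eventually_gt_atTop (0:ℝ)] with s hs
      rw [ae_restrict_iff' measurableSet_Ioi]
      refine ae_of_all _ fun u hu => ?_
      have hu0 : (0:ℝ) < u := hu
      by_cases hmem : u ∈ Set.Ioc 0 (s*R')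
      · rw [Set.indicator_of_mem hmem]
        have h1 : ‖((Q (u/s) * s : ℝ):ℂ)‖ ≤ M * u := by
          rw [Complex.norm_real, Real.norm_eq_abs, abs_mul, _root_.abs_of_nonneg hs.le]
          have h2 := hQb (u/s) (by positivity)
          calc |Q (u/s)| * s ≤ (M * (u/s)) * s := by gcongr
            _ = M * u := by field_simp
        calc ‖((Q (u/s) * s : ℝ):ℂ) * sl14g1 a b c u‖
            = ‖((Q (u/s) * s : ℝ):ℂ)‖ * ‖sl14g1 a b c u‖ := norm_mul _ _
          _ ≤ (M * u) * ‖sl14g1 a b c u‖ := by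
              gcongr
          _ = M * ‖(u:ℂ) * sl14g1 a b c u‖ := by
              rw [norm_mul, Complex.norm_real, Real.norm_eq_abs, _root_.abs_of_nonneg hu0.le]
              ring
          _ ≤ M * (C6 * Real.exp (-δ*u)) := by
              gcongr
              exact sl14ug1_norm_le ha hb hu0
      · rw [Set.indicator_of_notMem hmem]
        simp only [norm_zero]
        positivity
    · rw [ae_restrict_iff' measurableSet_Ioi]
      refine ae_of_all _ fun u hu => ?_
      have hu0 : (0:ℝ) < u := hu
      have hdiv : Tendsto (fun s : ℝ => u/s) atTop (𝓝[>] (0:ℝ)) := by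
        rw [tendsto_nhdsWithin_iff]
        constructor
        · exact Tendsto.div_atTop tendsto_const_nhds tendsto_id
        · filter_upwards [eventually_gt_atTop (0:ℝ)] with s hs
          exact div_pos hu0 hs
      have hlim0 : Tendsto (fun s : ℝ => Q (u/s) * s) atTop (𝓝 (ψ0 * u)) := by
        have h1 := (hψ.comp hdiv).mul_const u
        refine h1.congr' ?_
        filter_upwards [eventually_gt_atTop (0:ℝ)] with s hs
        show 1/(u/s) * Q (u/s) * u = Q (u/s) * s
        rw [one_div_div]
        field_simp
      have hlim : Tendsto (fun s : ℝ => ((Q (u/s) * s : ℝ):ℂ) * sl14g1 a b c u) atTop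
          (𝓝 ((ψ0:ℂ) * ((u:ℂ) * sl14g1 a b c u))) := by
        have h2 := ((Complex.continuous_ofReal.tendsto _).comp hlim0).mul_const
          (sl14g1 a b c u)
        have h3 : ((ψ0 * u : ℝ):ℂ) * sl14g1 a b c u
            = (ψ0:ℂ) * ((u:ℂ) * sl14g1 a b c u) := by push_cast; ring
        rw [h3] at h2
        exact h2
      refine Tendsto.congr' ?_ hlim
      filter_upwards [eventually_ge_atTop (u/R')] with s hs
      rw [Set.indicator_of_mem]
      refine ⟨hu0, ?_⟩
      rw [div_le_iff₀ hR'pos] at hs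
      exact hs
  -- final integral identity
  have hflip : (∫ u in Set.Ioi (0:ℝ), (u:ℂ) * sl14g1 a b c u) = - ∫ y in Set.Ioi (0:ℝ), g y := by
    have hIexp : IntegrableOn (fun u : ℝ => Real.exp (-δ*u)) (Set.Ioi 0) :=
      exp_neg_integrableOn_Ioi 0 hδ0
    have hIug1 : IntegrableOn (fun u : ℝ => (u:ℂ) * sl14g1 a b c u) (Set.Ioi 0) := by
      refine Integrable.mono' (hIexp.const_mul C6) ?_ ?_
      · exact ((Complex.measurable_ofReal.mul hg1m).aestronglyMeasurable).restrict
      · rw [ae_restrict_iff' measurableSet_Ioi]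
        exact ae_of_all _ fun u hu => sl14ug1_norm_le ha hb hu
    have hIg : IntegrableOn g (Set.Ioi 0) := by
      refine Integrable.mono' (hIexp.const_mul Cg) ?_ ?_
      · exact hgm.aestronglyMeasurable.restrict
      · rw [ae_restrict_iff' measurableSet_Ioi]
        refine ae_of_all _ fun u hu => ?_
        rw [hgh u]
        exact sl14g_norm_le ha hb hu
    have hIh' : IntegrableOn (sl14h' a b c) (Set.Ioi 0) := by
      refine Integrable.mono' (hIexp.const_mul (‖c‖*(‖a‖+‖b‖))) ?_ ?_
      · exact (continuous_iff_continuousAt.2 fun u =>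
          (sl14h'_deriv u).continuousAt).aestronglyMeasurable.restrict
      · rw [ae_restrict_iff' measurableSet_Ioi]
        exact ae_of_all _ fun u hu => sl14h'_norm_le hu.le
    have hzero : (∫ u in Set.Ioi (0:ℝ), sl14h' a b c u) = 0 := by
      have h0 := integral_Ioi_of_hasDerivAt_of_tendsto (a := 0) (f := sl14h a b c)
        (f' := sl14h' a b c) (m := 0) hhcont.continuousWithinAt
        (fun x _ => sl14h_deriv x) hIh' hhtend
      simpa [sl14h] using h0
    have hsum : (∫ u in Set.Ioi (0:ℝ), sl14h' a b c u)
        = (∫ u in Set.Ioi (0:ℝ), (u:ℂ) * sl14g1 a b c u) + ∫ y in Set.Ioi (0:ℝ), g y := by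
      rw [← integral_add hIug1 hIg]
      refine setIntegral_congr_fun measurableSet_Ioi fun u hu => ?_
      have hu' : (u:ℂ) ≠ 0 := Complex.ofReal_ne_zero.2 (ne_of_gt hu)
      rw [hgh u, sl14g1]
      field_simp
      ring
    rw [hzero] at hsum
    exact eq_neg_of_add_eq_zero_left hsum.symm
  -- assemble
  have hcomb := hbd.sub hdct
  rw [zero_sub] at hcomb
  have : (∫ u in Set.Ioi (0:ℝ), (ψ0 : ℂ) * ((u:ℂ) * sl14g1 a b c u))
      = (ψ0:ℂ) * ∫ u in Set.Ioi (0:ℝ), (u:ℂ) * sl14g1 a b c u := integral_const_mul _ _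
  rw [this, hflip] at hcomb
  have hval : -((ψ0:ℂ) * - ∫ y in Set.Ioi (0:ℝ), g y) = (ψ0:ℂ) * ∫ y in Set.Ioi (0:ℝ), g y := by
    ring
  rw [hval] at hcomb
  refine hcomb.congr' ?_
  filter_upwards [eventually_gt_atTop (0:ℝ)] with s hs
  exact (key s hs).symm
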